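/- With P_m a polynomial with positive coefficients and a_0 > 1, the map S on compactly supported functions defined by (Sx)(t) = x(t−a)/P_m(t−a) for t > a and 0 otherwise satisfies ‖Sx‖_p^p ≤ (1/a_0^p)‖x‖_p^p, TS = I, and S^n x → 0 in L^p as n → ∞ for every compactly supported x. -/

import Mathlib

open MeasureTheory Filter Set

/-- The right-inverse map `S` for the polynomial weight:
`(Sx)(t) = x(t−a)/P(t−a)` for `t > a`, `0` otherwise. -/
noncomputable def Sshift (P : ℝ → ℝ) (a : ℝ) (x : ℝ → ℝ) : ℝ → ℝ :=
  fun t => if a < t then x (t - a) / P (t - a) else 0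

lemma Sshift_map (a : ℝ) :
    (volume.restrict (Set.Ioi (0:ℝ))).map (· + a) = volume.restrict (Set.Ioi a) := by
  have h : ((· + a) ⁻¹' Set.Ioi a : Set ℝ) = Set.Ioi 0 := by
    ext t; simp [Set.mem_Ioi]
  calc (volume.restrict (Set.Ioi (0:ℝ))).map (· + a)
      = (volume.restrict ((· + a) ⁻¹' Set.Ioi a)).map (· + a) := by rw [h]
    _ = (volume.map (· + a)).restrict (Set.Ioi a) :=
        (Measure.restrict_map (measurable_add_const a) measurableSet_Ioi).symm
    _ = volume.restrict (Set.Ioi a) := by rw [map_add_right_eq_self volume a]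

/-- Key norm bound, for arbitrary `y` (no measurability needed). -/
lemma Sshift_norm_le (P : ℝ → ℝ) (a : ℝ) (ha : 0 < a) (c0 : ℝ) (hc0 : 0 < c0)
    (hPlb : ∀ s : ℝ, 0 < s → c0 ≤ P s) (p : ENNReal) (y : ℝ → ℝ) :
    eLpNorm (Sshift P a y) p (volume.restrict (Set.Ioi (0:ℝ))) ≤
      ENNReal.ofReal c0⁻¹ * eLpNorm y p (volume.restrict (Set.Ioi (0:ℝ))) := by
  set G : ℝ → ℝ := Set.indicator (Set.Ioi a) (fun t => y (t - a)) with hG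
  have hpt : ∀ t : ℝ, ‖Sshift P a y t‖ ≤ ‖(c0⁻¹ • G) t‖ := by
    intro t
    by_cases h : a < t
    · have hs : (0:ℝ) < t - a := by linarith
      have hP : c0 ≤ P (t - a) := hPlb _ hs
      have hPpos : 0 < P (t - a) := lt_of_lt_of_le hc0 hP
      simp only [Sshift, if_pos h, hG, Pi.smul_apply, Set.indicator_of_mem (Set.mem_Ioi.mpr h),
        smul_eq_mul, norm_div, Real.norm_eq_abs, abs_of_pos hPpos, norm_mul,
        abs_of_pos (inv_pos.mpr hc0)]
      rw [div_le_iff₀ hPpos]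
      calc |y (t - a)| = c0⁻¹ * |y (t - a)| * c0 := by field_simp
        _ ≤ c0⁻¹ * |y (t - a)| * P (t - a) := by
            apply mul_le_mul_of_nonneg_left hP
            positivity
    · simp only [Sshift, if_neg h, norm_zero, Pi.smul_apply, smul_eq_mul, norm_mul,
        Real.norm_eq_abs]
      positivity
  calc eLpNorm (Sshift P a y) p (volume.restrict (Set.Ioi (0:ℝ)))
      ≤ eLpNorm (c0⁻¹ • G) p (volume.restrict (Set.Ioi (0:ℝ))) := eLpNorm_mono hpt
    _ = (‖(c0⁻¹ : ℝ)‖₊ : ENNReal) * eLpNorm G p (volume.restrict (Set.Ioi (0:ℝ))) :=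
        eLpNorm_const_smul _ _ _ _
    _ = ENNReal.ofReal c0⁻¹ * eLpNorm G p (volume.restrict (Set.Ioi (0:ℝ))) := by
        rw [ENNReal.ofReal, Real.toNNReal_eq_nnnorm_of_nonneg (by positivity)]
    _ ≤ ENNReal.ofReal c0⁻¹ * eLpNorm y p (volume.restrict (Set.Ioi (0:ℝ))) := by
        apply mul_le_mul_right
        have h1 : eLpNorm G p (volume.restrict (Set.Ioi (0:ℝ)))
            = eLpNorm (fun t => y (t - a)) p
              ((volume.restrict (Set.Ioi (0:ℝ))).restrict (Set.Ioi a)) := by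
          rw [hG, eLpNorm_indicator_eq_eLpNorm_restrict measurableSet_Ioi]
        rw [h1, Measure.restrict_restrict measurableSet_Ioi]
        have h2 : Set.Ioi a ∩ Set.Ioi (0:ℝ) = Set.Ioi a := by
          rw [Set.inter_eq_left]
          intro t ht
          exact lt_trans ha ht
        rw [h2, ← Sshift_map a,
          MeasurableEmbedding.eLpNorm_map_measure (measurableEmbedding_addRight a)]
        have : ((fun t => y (t - a)) ∘ (· + a)) = y := by
          ext s; simp
        rw [this]

lemma Sshift_aesm (P : ℝ → ℝ) (hPm : Measurable P) (a : ℝ) (ha : 0 < a)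
    (y : ℝ → ℝ) (hy : AEStronglyMeasurable y (volume.restrict (Set.Ioi (0:ℝ)))) :
    AEStronglyMeasurable (Sshift P a y) (volume.restrict (Set.Ioi (0:ℝ))) := by
  have heq : Sshift P a y = Set.indicator (Set.Ioi a) (fun t => y (t - a) / P (t - a)) := by
    ext t
    by_cases h : a < t <;> simp [Sshift, Set.indicator, Set.mem_Ioi, h]
  rw [heq, aestronglyMeasurable_indicator_iff measurableSet_Ioi,
    Measure.restrict_restrict measurableSet_Ioi]
  have h2 : Set.Ioi a ∩ Set.Ioi (0:ℝ) = Set.Ioi a := by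
    rw [Set.inter_eq_left]; intro t ht; exact lt_trans ha ht
  rw [h2, ← Sshift_map a,
    (measurableEmbedding_addRight a).aestronglyMeasurable_map_iff]
  have h3 : ((fun t => y (t - a) / P (t - a)) ∘ (· + a)) = fun s => y s * (P s)⁻¹ := by
    ext s; simp [div_eq_mul_inv]
  rw [h3]
  exact hy.mul (hPm.inv.aestronglyMeasurable)

/-- with `P_m(t) = a_m t^m + ⋯ + a_0`, all coefficients positive
and `a_0 > 1`, the map `S` on compactly supported `p`-integrable functions
satisfies `‖Sx‖_p^p ≤ a_0^{-p}‖x‖_p^p`, `TS = I` for `(Tx)(t) = P_m(t)x(t+a)`,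
and `S^n x → 0` in `L^p(0,∞)`. -/
theorem stmt14 (p : ENNReal) [Fact (1 ≤ p)] (hp : p ≠ ⊤) (a : ℝ) (ha : 0 < a)
    (m : ℕ) (hm : 1 ≤ m) (c : ℕ → ℝ) (hc : ∀ i ≤ m, 0 < c i) (hc0 : 1 < c 0)
    (P : ℝ → ℝ) (hP : ∀ t : ℝ, P t = ∑ i ∈ Finset.range (m + 1), c i * t ^ i)
    (x : ℝ → ℝ) (hx : MemLp x p (volume.restrict (Set.Ioi (0:ℝ))))
    (hsupp : ∃ R : ℝ, ∀ t : ℝ, R ≤ t → x t = 0) :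
    (∃ R' : ℝ, ∀ t : ℝ, R' ≤ t → Sshift P a x t = 0) ∧
    MemLp (Sshift P a x) p (volume.restrict (Set.Ioi (0:ℝ))) ∧
    (eLpNorm (Sshift P a x) p (volume.restrict (Set.Ioi (0:ℝ))) ≤
      ENNReal.ofReal (c 0)⁻¹ * eLpNorm x p (volume.restrict (Set.Ioi (0:ℝ)))) ∧
    (∀ t : ℝ, 0 < t → P t * Sshift P a x (t + a) = x t) ∧
    Tendsto (fun n : ℕ => eLpNorm ((Sshift P a)^[n] x) p
      (volume.restrict (Set.Ioi (0:ℝ)))) atTop (nhds 0) := by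
  have hc0pos : (0:ℝ) < c 0 := lt_trans one_pos hc0
  -- lower bound of P
  have hPlb : ∀ s : ℝ, 0 < s → c 0 ≤ P s := by
    intro s hs
    rw [hP]
    have h0 : (0:ℕ) ∈ Finset.range (m + 1) := by simp
    calc c 0 = c 0 * s ^ 0 := by ring
      _ ≤ ∑ i ∈ Finset.range (m + 1), c i * s ^ i := by
          apply Finset.single_le_sum (f := fun i => c i * s ^ i) _ h0
          intro i hi
          have hci : 0 < c i := hc i (Nat.lt_succ_iff.mp (Finset.mem_range.mp hi))
          show (0:ℝ) ≤ c i * s ^ i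
          positivity
  -- measurability of P
  have hPm : Measurable P := by
    have : P = fun t => ∑ i ∈ Finset.range (m + 1), c i * t ^ i := funext hP
    rw [this]
    exact Finset.measurable_sum _ fun i _ => (measurable_id.pow_const i).const_mul _
  -- the norm bound as a reusable fact
  have hbound : ∀ y : ℝ → ℝ,
      eLpNorm (Sshift P a y) p (volume.restrict (Set.Ioi (0:ℝ))) ≤
        ENNReal.ofReal (c 0)⁻¹ * eLpNorm y p (volume.restrict (Set.Ioi (0:ℝ))) :=
    fun y => Sshift_norm_le P a ha (c 0) hc0pos hPlb p y
  refine ⟨?_, ?_, hbound x, ?_, ?_⟩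
  · -- support
    obtain ⟨R, hR⟩ := hsupp
    refine ⟨R + a, fun t ht => ?_⟩
    unfold Sshift
    by_cases h : a < t
    · rw [if_pos h, hR (t - a) (by linarith), zero_div]
    · rw [if_neg h]
  · -- Memℒp
    refine ⟨Sshift_aesm P hPm a ha x hx.aestronglyMeasurable, ?_⟩
    calc eLpNorm (Sshift P a x) p (volume.restrict (Set.Ioi (0:ℝ)))
        ≤ ENNReal.ofReal (c 0)⁻¹ * eLpNorm x p (volume.restrict (Set.Ioi (0:ℝ))) := hbound x
      _ < ⊤ := ENNReal.mul_lt_top ENNReal.ofReal_lt_top hx.2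
  · -- TS = I
    intro t ht
    have h1 : a < t + a := by linarith
    unfold Sshift
    rw [if_pos h1]
    have h2 : t + a - a = t := by ring
    rw [h2]
    have hPt : P t ≠ 0 := ne_of_gt (lt_of_lt_of_le hc0pos (hPlb t ht))
    field_simp
  · -- S^n x → 0
    have hiter : ∀ n : ℕ, eLpNorm ((Sshift P a)^[n] x) p (volume.restrict (Set.Ioi (0:ℝ))) ≤
        (ENNReal.ofReal (c 0)⁻¹) ^ n * eLpNorm x p (volume.restrict (Set.Ioi (0:ℝ))) := by
      intro n
      induction n with
      | zero => simp
      | succ k ih =>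
        rw [Function.iterate_succ_apply']
        calc eLpNorm (Sshift P a ((Sshift P a)^[k] x)) p (volume.restrict (Set.Ioi (0:ℝ)))
            ≤ ENNReal.ofReal (c 0)⁻¹ *
              eLpNorm ((Sshift P a)^[k] x) p (volume.restrict (Set.Ioi (0:ℝ))) := hbound _
          _ ≤ ENNReal.ofReal (c 0)⁻¹ *
              ((ENNReal.ofReal (c 0)⁻¹) ^ k *
                eLpNorm x p (volume.restrict (Set.Ioi (0:ℝ)))) := mul_le_mul_right ih _
          _ = (ENNReal.ofReal (c 0)⁻¹) ^ (k + 1) *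
                eLpNorm x p (volume.restrict (Set.Ioi (0:ℝ))) := by ring
    have hr : ENNReal.ofReal (c 0)⁻¹ < 1 := by
      rw [ENNReal.ofReal_lt_one]
      rw [inv_lt_one_iff₀]
      right; exact hc0
    have hlim : Tendsto (fun n : ℕ => (ENNReal.ofReal (c 0)⁻¹) ^ n *
        eLpNorm x p (volume.restrict (Set.Ioi (0:ℝ)))) atTop (nhds 0) := by
      have h0 : Tendsto (fun n : ℕ => (ENNReal.ofReal (c 0)⁻¹) ^ n) atTop (nhds 0) :=
        ENNReal.tendsto_pow_atTop_nhds_zero_of_lt_one hr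
      have := ENNReal.Tendsto.mul_const h0 (Or.inr hx.2.ne)
      simpa using this
    exact tendsto_of_tendsto_of_tendsto_of_le_of_le tendsto_const_nhds hlim
      (fun n => zero_le) hiter
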